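/- Let k be an algebraically closed field of characteristic different from 2, let V be a 2n-dimensional k-vector space equipped with a hyperbolic quadratic form Q, and let P ⊂ V be an (n+1)-dimensional subspace such that the restriction Q|_P is non-degenerate. Then there exists a totally isotropic n-dimensional subspace W ⊂ V such that dim(P ∩ W) = 1. -/

import Mathlib

/-- The hyperbolic plane quadratic form over `R`: `(x, y) ↦ x * y`. -/
noncomputable def hypPlane (R : Type*) [CommRing R] : QuadraticForm R (R × R) :=
  LinearMap.BilinMap.toQuadraticMap
    (LinearMap.mk₂ R (fun p q => p.1 * q.2)
      (fun p p' q => by simp [add_mul])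
      (fun c p q => by simp [mul_assoc])
      (fun p q q' => by simp [mul_add])
      (fun c p q => by simp [mul_left_comm, mul_assoc]))

/-- The orthogonal direct sum of `n` copies of the hyperbolic plane over `R`. -/
noncomputable def hypSum (R : Type*) [CommRing R] (n : ℕ) :
    QuadraticForm R (Fin n → R × R) :=
  QuadraticMap.pi fun _ => hypPlane R

lemma hypPlane_apply {R : Type*} [CommRing R] (p : R × R) : hypPlane R p = p.1 * p.2 := rfl

lemma hypSum_apply {R : Type*} [CommRing R] {n : ℕ} (f : Fin n → R × R) :
    hypSum R n f = ∑ i, (f i).1 * (f i).2 := by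
  simp [hypSum, QuadraticMap.pi_apply, hypPlane_apply]

lemma polar_hypSum {R : Type*} [CommRing R] {n : ℕ} (f g : Fin n → R × R) :
    QuadraticMap.polar (hypSum R n) f g = ∑ i, ((f i).1 * (g i).2 + (g i).1 * (f i).2) := by
  simp only [QuadraticMap.polar, hypSum_apply, ← Finset.sum_sub_distrib]
  refine Finset.sum_congr rfl fun i _ => ?_
  simp only [Pi.add_apply, Prod.fst_add, Prod.snd_add]
  ring

lemma polarBilin_isRefl' {R M : Type*} [CommRing R] [AddCommGroup M] [Module R M]
    (Q : QuadraticForm R M) : (QuadraticMap.polarBilin Q).IsRefl := fun x y h => by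
  rw [QuadraticMap.polarBilin_apply_apply, QuadraticMap.polar_comm]; exact h

lemma hypSum_polar_nondeg {K : Type*} [Field K] {n : ℕ} :
    LinearMap.BilinForm.Nondegenerate (QuadraticMap.polarBilin (hypSum K n)) := by
  refine (LinearMap.IsRefl.nondegenerate_iff_separatingLeft (polarBilin_isRefl' _)).mpr ?_
  intro f hf
  funext i
  have h1 := hf (Pi.single i ((0 : K), (1 : K)))
  have h2 := hf (Pi.single i ((1 : K), (0 : K)))
  rw [QuadraticMap.polarBilin_apply_apply, polar_hypSum] at h1 h2
  rw [Finset.sum_eq_single i ?_ (by simp)] at h1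
  rw [Finset.sum_eq_single i ?_ (by simp)] at h2
  · simp only [Pi.single_eq_same] at h1 h2
    have : f i = 0 := by
      have e1 : (f i).2 = 0 := by simpa using h2
      have e2 : (f i).1 = 0 := by simpa using h1
      exact Prod.ext e2 e1
    simpa using this
  · intro j _ hj; simp [Pi.single_eq_of_ne hj]
  · intro j _ hj; simp [Pi.single_eq_of_ne hj]

open Module QuadraticMap

/-- Scaling isometry: weighted sum of squares with unit weights over an alg. closed field is
equivalent to the sum of squares. -/
noncomputable def isometrySumSquaresAC {K : Type*} [Field K] [IsAlgClosed K] {m : ℕ}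
    (w : Fin m → Kˣ) :
    QuadraticMap.IsometryEquiv (QuadraticMap.weightedSumSquares K w)
      (QuadraticMap.weightedSumSquares K (1 : Fin m → K)) := by
  have h : ∀ i : Fin m, ∃ u : K, u ≠ 0 ∧ u * u = (w i : K) := by
    intro i
    obtain ⟨u, hu⟩ := IsAlgClosed.exists_pow_nat_eq (w i : K) (n := 2) (by norm_num)
    refine ⟨u, fun h0 => ?_, by rw [← _root_.sq]; exact hu⟩
    rw [h0] at hu
    exact (w i).ne_zero (by rw [← hu]; ring)
  choose u hu hu2 using h
  refine ⟨LinearEquiv.piCongrRight fun i => LinearEquiv.smulOfNeZero K K (u i) (hu i), fun v => ?_⟩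
  simp only [QuadraticMap.weightedSumSquares_apply]
  refine Finset.sum_congr rfl fun i _ => ?_
  simp only [LinearEquiv.piCongrRight_apply, Pi.one_apply]
  simp only [LinearMap.toFun_eq_coe, LinearEquiv.coe_coe, LinearEquiv.piCongrRight_apply]
  rw [show (LinearEquiv.smulOfNeZero K K (u i) (hu i)) (v i) = u i * v i from rfl]
  rw [one_smul, Units.smul_def, smul_eq_mul]
  rw [← hu2 i]
  ring

theorem equivalent_sumSq_AC {K M : Type*} [Field K] [IsAlgClosed K] [Invertible (2 : K)]
    [AddCommGroup M] [Module K M] [FiniteDimensional K M] (Q : QuadraticForm K M)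
    (hQ : LinearMap.BilinForm.Nondegenerate (QuadraticMap.polarBilin Q)) :
    QuadraticMap.Equivalent Q
      (QuadraticMap.weightedSumSquares K (1 : Fin (finrank K M) → K)) := by
  have hsep : (QuadraticMap.associated (R := K) Q).SeparatingLeft := by
    intro x hx
    apply hQ.1 x
    intro y
    have h2 : (QuadraticMap.polarBilin Q) x y
        = (2 • (QuadraticMap.associatedHom K) Q) x y := by
      rw [QuadraticMap.two_nsmul_associated K Q]
    rw [h2]
    simp only [LinearMap.smul_apply, hx y, smul_zero]
  obtain ⟨w, ⟨hw⟩⟩ := Q.equivalent_weightedSumSquares_units_of_nondegenerate' hsep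
  exact ⟨hw.trans (isometrySumSquaresAC w)⟩

noncomputable def isometryFinCast (K : Type*) [Field K] {a b : ℕ} (h : a = b) :
    QuadraticMap.IsometryEquiv (QuadraticMap.weightedSumSquares K (1 : Fin a → K))
      (QuadraticMap.weightedSumSquares K (1 : Fin b → K)) := by
  subst h; exact QuadraticMap.IsometryEquiv.refl _

theorem isometryEquiv_of_nondeg_AC {K M₁ M₂ : Type*} [Field K] [IsAlgClosed K]
    [Invertible (2 : K)]
    [AddCommGroup M₁] [Module K M₁] [FiniteDimensional K M₁]
    [AddCommGroup M₂] [Module K M₂] [FiniteDimensional K M₂]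
    (Q₁ : QuadraticForm K M₁) (Q₂ : QuadraticForm K M₂)
    (h₁ : LinearMap.BilinForm.Nondegenerate (QuadraticMap.polarBilin Q₁))
    (h₂ : LinearMap.BilinForm.Nondegenerate (QuadraticMap.polarBilin Q₂))
    (hdim : finrank K M₁ = finrank K M₂) :
    Nonempty (QuadraticMap.IsometryEquiv Q₁ Q₂) := by
  obtain ⟨e₁⟩ := equivalent_sumSq_AC Q₁ h₁
  obtain ⟨e₂⟩ := equivalent_sumSq_AC Q₂ h₂
  exact ⟨e₁.trans ((isometryFinCast K hdim).trans e₂.symm)⟩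

lemma polarBilin_neg_nondeg {K M : Type*} [Field K] [AddCommGroup M] [Module K M]
    (Q : QuadraticForm K M)
    (h : LinearMap.BilinForm.Nondegenerate (QuadraticMap.polarBilin Q)) :
    LinearMap.BilinForm.Nondegenerate (QuadraticMap.polarBilin (-Q)) := by
  refine (LinearMap.IsRefl.nondegenerate_iff_separatingLeft (polarBilin_isRefl' _)).mpr ?_
  intro x hx
  apply h.1 x
  intro y
  have := hx y
  simp only [QuadraticMap.polarBilin_apply_apply, QuadraticMap.polar, QuadraticMap.neg_apply]
    at this ⊢
  linear_combination (-1 : K) * this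


/-- Let `k` be an algebraically closed field of characteristic `≠ 2`, `V` a `2n`-dimensional
`k`-vector space with a hyperbolic quadratic form `Q` (i.e. `Q` is isometric to the orthogonal
sum of `n` hyperbolic planes), and `P ⊂ V` an `(n+1)`-dimensional subspace such that `Q|_P` is
non-degenerate.  Then there is a totally isotropic `n`-dimensional subspace `W ⊂ V` with
`dim (P ⊓ W) = 1`. -/
theorem exists_totallyIsotropic_meet_dim_one_of_isAlgClosed
    {k V : Type*} [Field k] [IsAlgClosed k] (hchar : ringChar k ≠ 2)
    [AddCommGroup V] [Module k V] [FiniteDimensional k V]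
    {n : ℕ} (hdim : Module.finrank k V = 2 * n)
    (Q : QuadraticForm k V) (hQ : QuadraticMap.Equivalent Q (hypSum k n))
    (P : Submodule k V) (hP : Module.finrank k P = n + 1)
    (hPnd : LinearMap.BilinForm.Nondegenerate
      (QuadraticMap.polarBilin (Q.comp P.subtype))) :
    ∃ W : Submodule k V, Module.finrank k W = n ∧ (∀ w ∈ W, Q w = 0) ∧
      Module.finrank k ↥(P ⊓ W) = 1 := by
  haveI : Invertible (2 : k) := invertibleOfNonzero (Ring.two_ne_zero hchar)
  obtain ⟨e⟩ := hQ
  set B : LinearMap.BilinForm k V := QuadraticMap.polarBilin Q with hB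
  have hBapp : ∀ x y, B x y = Q (x + y) - Q x - Q y := fun x y => rfl
  have hBsymm : ∀ x y, B x y = B y x := fun x y => QuadraticMap.polar_comm Q x y
  have hrefl : B.IsRefl := fun x y h => by rw [hBsymm]; exact h
  have expand : ∀ x y : V, Q (x + y) = Q x + Q y + B x y := by
    intro x y; rw [hBapp]; ring
  have hQe : ∀ x, Q x = hypSum k n (e x) := fun x => (e.map_app x).symm
  have hpol : ∀ x y, B x y = QuadraticMap.polarBilin (hypSum k n) (e x) (e y) := by
    intro x y
    rw [hBapp, QuadraticMap.polarBilin_apply_apply]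
    simp only [QuadraticMap.polar]
    rw [hQe (x + y), hQe x, hQe y, map_add]
  have hBnd : B.Nondegenerate := by
    refine (LinearMap.IsRefl.nondegenerate_iff_separatingLeft hrefl).mpr ?_
    intro x hx
    have hex : e x = 0 := by
      apply hypSum_polar_nondeg.1 (e x)
      intro y'
      obtain ⟨y, hy⟩ := e.toLinearEquiv.surjective y'
      have h2 := hx y
      rw [hpol] at h2
      have hy' : e y = y' := hy
      rwa [hy'] at h2
    have : e x = e 0 := by rw [hex, map_zero]
    exact EquivLike.injective e this
  have restr : ∀ S : Submodule k V,
      QuadraticMap.polarBilin (Q.comp S.subtype) = B.restrict S := by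
    intro S
    refine LinearMap.ext fun x => LinearMap.ext fun y => ?_
    simp [QuadraticMap.polarBilin_apply_apply, QuadraticMap.polar, QuadraticMap.comp_apply,
      LinearMap.BilinForm.restrict_apply, hBapp]
  have hPnd' : (B.restrict P).Nondegenerate := by rw [← restr P]; exact hPnd
  have hn : 1 ≤ n := by
    have h1 := Submodule.finrank_le P
    by_contra h
    omega
  -- a maximal totally isotropic subspace L
  obtain ⟨L, hLrank, hLiso⟩ : ∃ L : Submodule k V, Module.finrank k L = n ∧
      ∀ x ∈ L, Q x = 0 := by
    set φ : (Fin n → k) →ₗ[k] (Fin n → k × k) :=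
      LinearMap.pi fun i => (LinearMap.inl k k k).comp (LinearMap.proj i) with hφ
    have hφapp : ∀ g i, φ g i = (g i, 0) := fun g i => rfl
    have hφinj : Function.Injective φ := by
      intro a b hab
      funext i
      have h2 := congrArg Prod.fst (congrFun hab i)
      simpa [hφapp] using h2
    refine ⟨Submodule.map (e.toLinearEquiv.symm : _ →ₗ[k] V) (LinearMap.range φ), ?_, ?_⟩
    · rw [LinearEquiv.finrank_map_eq e.toLinearEquiv.symm]
      rw [LinearMap.finrank_range_of_inj hφinj, Module.finrank_fin_fun]
    · rintro x ⟨y, ⟨g, rfl⟩, rfl⟩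
      have hex : e ((e.toLinearEquiv.symm : _ →ₗ[k] V) (φ g)) = φ g :=
        e.toLinearEquiv.apply_symm_apply (φ g)
      rw [hQe, hex, hypSum_apply]
      simp [hφapp]
  -- an isotropic vector in P
  obtain ⟨v, hvP, hQv, hv0⟩ : ∃ v, v ∈ P ∧ Q v = 0 ∧ v ≠ 0 := by
    have hPL : 1 ≤ Module.finrank k ↥(P ⊓ L) := by
      have h1 := Submodule.finrank_sup_add_finrank_inf_eq P L
      have h2 : Module.finrank k ↥(P ⊔ L) ≤ 2 * n := hdim ▸ Submodule.finrank_le _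
      omega
    have hne : P ⊓ L ≠ ⊥ := by
      intro h
      rw [h, finrank_bot] at hPL
      omega
    obtain ⟨v, hv, hv0⟩ := Submodule.exists_mem_ne_zero_of_ne_bot hne
    exact ⟨v, hv.1, hLiso v hv.2, hv0⟩
  have hBvv : B v v = 0 := by rw [hBapp]; rw [show v + v = (2:k) • v by module,
    QuadraticMap.map_smul, hQv]; ring_nf
  -- a hyperbolic partner
  obtain ⟨v', hv'P, hQv', hBvv'⟩ : ∃ v', v' ∈ P ∧ Q v' = 0 ∧ B v v' ≠ 0 := by
    obtain ⟨u, huP, hBvu⟩ : ∃ u, u ∈ P ∧ B v u ≠ 0 := by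
      by_contra h
      push_neg at h
      have h0 : (⟨v, hvP⟩ : P) = 0 := by
        apply hPnd'.1 ⟨v, hvP⟩
        intro y
        exact h y y.2
      exact hv0 (by simpa using congrArg Subtype.val h0)
    refine ⟨u - (Q u / B v u) • v,
      sub_mem huP (Submodule.smul_mem _ _ hvP), ?_, ?_⟩
    · rw [show u - (Q u / B v u) • v = u + (-(Q u / B v u)) • v by module, expand,
        QuadraticMap.map_smul]
      rw [_root_.map_smul (B u), hBsymm u v]
      simp only [hQv, smul_eq_mul, mul_zero, add_zero]
      field_simp
      ring
    · have : B v (u - (Q u / B v u) • v) = B v u - (Q u / B v u) * B v v := by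
        rw [_root_.map_sub, _root_.map_smul]
        simp [smul_eq_mul]
      rw [this, hBvv]
      simpa using hBvu
  have hBv'v' : B v' v' = 0 := by rw [hBapp]; rw [show v' + v' = (2:k) • v' by module,
    QuadraticMap.map_smul, hQv']; ring_nf
  set H : Submodule k V := Submodule.span k {v, v'} with hH
  have hvH : v ∈ H := Submodule.subset_span (by simp)
  have hv'H : v' ∈ H := Submodule.subset_span (by simp)
  have hHP : H ≤ P := by
    rw [hH, Submodule.span_le, Set.insert_subset_iff, Set.singleton_subset_iff]
    exact ⟨hvP, hv'P⟩
  have hHnd : (B.restrict H).Nondegenerate := by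
    refine (LinearMap.IsRefl.nondegenerate_iff_separatingLeft (B := B.restrict H)
      (fun x y h => hrefl _ _ h)).mpr ?_
    rintro ⟨x, hx⟩ hall
    obtain ⟨a, b, rfl⟩ := Submodule.mem_span_pair.mp hx
    have h1 : B (a • v + b • v') v' = 0 := hall ⟨v', hv'H⟩
    have h2 : B (a • v + b • v') v = 0 := hall ⟨v, hvH⟩
    simp only [map_add, LinearMap.add_apply, _root_.map_smul, LinearMap.smul_apply,
      smul_eq_mul, hBvv, hBv'v', mul_zero, add_zero, zero_add] at h1 h2
    have ha : a = 0 := by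
      rcases mul_eq_zero.mp h1 with h | h
      · exact h
      · exact absurd h hBvv'
    have hb : b = 0 := by
      rw [hBsymm v' v] at h2
      rcases mul_eq_zero.mp h2 with h | h
      · exact h
      · exact absurd h hBvv'
    ext
    simp [ha, hb]
  have hHrank : Module.finrank k H = 2 := by
    have hli : LinearIndependent k ![v, v'] := by
      rw [LinearIndependent.pair_iff]
      intro s t hst
      have h1 : B (s • v + t • v') v' = 0 := by rw [hst]; simp
      have h2 : B (s • v + t • v') v = 0 := by rw [hst]; simp
      simp only [map_add, LinearMap.add_apply, _root_.map_smul, LinearMap.smul_apply, smul_eq_mul,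
        hBvv, hBv'v', mul_zero, add_zero, zero_add] at h1 h2
      rw [hBsymm v' v] at h2
      constructor
      · rcases mul_eq_zero.mp h1 with h | h
        · exact h
        · exact absurd h hBvv'
      · rcases mul_eq_zero.mp h2 with h | h
        · exact h
        · exact absurd h hBvv'
    have hr : Set.range ![v, v'] = {v, v'} := by
      ext z
      simp [Matrix.range_cons, Matrix.range_empty, or_comm]
    have h2 := finrank_span_eq_card hli
    rw [hr] at h2
    rw [hH, h2]
    simp
  have hHcompl : IsCompl H (B.orthogonal H) :=
    LinearMap.BilinForm.isCompl_orthogonal_of_restrict_nondegenerate hrefl hHnd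
  set P₁ : Submodule k V := B.orthogonal H ⊓ P with hP₁
  have hP₁P : P₁ ≤ P := inf_le_right
  have hPsplit : H ⊔ P₁ = P := by
    rw [hP₁, ← sup_inf_assoc_of_le _ hHP, codisjoint_iff.mp hHcompl.codisjoint, top_inf_eq]
  have hHdisj : H ⊓ P₁ = ⊥ := by
    rw [← le_bot_iff, ← disjoint_iff.mp hHcompl.disjoint]
    exact inf_le_inf_left H inf_le_left
  have hP₁rank : Module.finrank k P₁ = n - 1 := by
    have h1 := Submodule.finrank_sup_add_finrank_inf_eq H P₁
    rw [hPsplit, hHdisj, hP, hHrank, finrank_bot] at h1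
    omega
  have hBHP₁ : ∀ x ∈ P₁, ∀ h ∈ H, B h x = 0 := fun x hx h hh => hx.1 h hh
  have hP₁nd : (B.restrict P₁).Nondegenerate := by
    refine (LinearMap.IsRefl.nondegenerate_iff_separatingLeft (B := B.restrict P₁)
      (fun x y h => hrefl _ _ h)).mpr ?_
    rintro ⟨x, hx⟩ hall
    have hxP : x ∈ P := hx.2
    have hkey : ∀ p ∈ P, B x p = 0 := by
      intro p hp
      have hp' : p ∈ H ⊔ P₁ := hPsplit ▸ hp
      obtain ⟨h, hh, y, hy, rfl⟩ := Submodule.mem_sup.mp hp'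
      have e1 : B x h = 0 := hrefl _ _ (hBHP₁ x hx h hh)
      have e2 : B x y = 0 := hall ⟨y, hy⟩
      rw [map_add, e1, e2, add_zero]
    have h0 : (⟨x, hxP⟩ : P) = 0 := by
      apply hPnd'.1 ⟨x, hxP⟩
      intro y
      exact hkey y y.2
    exact Subtype.ext (by simpa using congrArg Subtype.val h0)
  set Pp : Submodule k V := B.orthogonal P with hPp
  have hPcompl : IsCompl P Pp :=
    LinearMap.BilinForm.isCompl_orthogonal_of_restrict_nondegenerate hrefl hPnd'
  have hBPP : ∀ p ∈ P, ∀ x ∈ Pp, B p x = 0 := fun p hp x hx => hx p hp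
  have hPdisj : ∀ x, x ∈ P → x ∈ Pp → x = 0 := by
    intro x h1 h2
    exact (Submodule.mem_bot k).mp (disjoint_iff.mp hPcompl.disjoint ▸
      Submodule.mem_inf.mpr ⟨h1, h2⟩)
  have hPprank : Module.finrank k Pp = n - 1 := by
    rw [hPp, LinearMap.BilinForm.finrank_orthogonal hBnd, hdim, hP]
    omega
  have hPpnd : (B.restrict Pp).Nondegenerate := by
    apply B.nondegenerate_restrict_of_disjoint_orthogonal hrefl
    rw [hPp, LinearMap.BilinForm.orthogonal_orthogonal hBnd hrefl]
    exact hPcompl.disjoint.symm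
  -- the isometry f : P₁ → Pp with Q (f x) = - Q x
  obtain ⟨f⟩ : Nonempty (QuadraticMap.IsometryEquiv (Q.comp P₁.subtype)
      (-(Q.comp Pp.subtype))) := by
    apply isometryEquiv_of_nondeg_AC
    · rw [restr P₁]; exact hP₁nd
    · exact polarBilin_neg_nondeg _ (by rw [restr Pp]; exact hPpnd)
    · rw [hP₁rank, hPprank]
  have hQf : ∀ x : P₁, Q ((f x : V)) = - Q (x : V) := by
    intro x
    have := f.map_app x
    simp only [QuadraticMap.neg_apply, QuadraticMap.comp_apply, Submodule.subtype_apply] at this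
    linear_combination (-1 : k) * this
  set g : P₁ →ₗ[k] V := P₁.subtype + Pp.subtype ∘ₗ (f.toLinearEquiv : P₁ →ₗ[k] Pp) with hgdef
  have hg : ∀ x : P₁, g x = (x : V) + ((f x : V)) := fun x => rfl
  have hfx_mem : ∀ x : P₁, ((f x : V)) ∈ Pp := fun x => (f x).2
  have hg0 : ∀ x : P₁, g x = 0 → x = 0 := by
    intro x hx
    rw [hg] at hx
    have h1 : ((f x : V)) = -(x : V) := by linear_combination (norm := module) hx
    have h2 : (x : V) ∈ Pp := by rw [← neg_neg (x : V), ← h1]; exact neg_mem (hfx_mem x)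
    have h3 : (x : V) = 0 := hPdisj _ (hP₁P x.2) h2
    exact Subtype.ext h3
  have ginj : Function.Injective g := by
    intro x y hxy
    have : g (x - y) = 0 := by rw [_root_.map_sub, hxy, sub_self]
    have := hg0 _ this
    rwa [sub_eq_zero] at this
  set W : Submodule k V := (k ∙ v) ⊔ LinearMap.range g with hW
  have hmemW : ∀ w ∈ W, ∃ (a : k) (x : P₁), w = a • v + g x := by
    intro w hw
    obtain ⟨s, hs, t, ht, rfl⟩ := Submodule.mem_sup.mp hw
    obtain ⟨a, rfl⟩ := Submodule.mem_span_singleton.mp hs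
    obtain ⟨x, rfl⟩ := ht
    exact ⟨a, x, rfl⟩
  have finj : ∀ x : P₁, ((f x : V)) = 0 → x = 0 := by
    intro x h0
    have h1 : f x = f 0 := by rw [map_zero]; exact Subtype.ext h0
    exact EquivLike.injective f h1
  have key : ∀ (z : V), z ∈ P → ∀ (a : k) (x : P₁), z = a • v + g x → x = 0 := by
    intro z hzP a x hz
    have hfx : ((f x : V)) = z - a • v - (x : V) := by
      rw [hg] at hz
      rw [hz]
      module
    have hmem : ((f x : V)) ∈ P := by
      rw [hfx]
      exact sub_mem (sub_mem hzP (Submodule.smul_mem _ _ hvP)) (hP₁P x.2)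
    exact finj x (hPdisj _ hmem (hfx_mem x))
  have hvW : v ∈ W := Submodule.mem_sup_left (Submodule.mem_span_singleton_self v)
  have hPW : P ⊓ W = (k ∙ v) := by
    apply le_antisymm
    · rintro z hz
      obtain ⟨hzP, hzW⟩ := Submodule.mem_inf.mp hz
      obtain ⟨a, x, rfl⟩ := hmemW z hzW
      have hx0 : x = 0 := key _ hzP a x rfl
      rw [hx0, map_zero, add_zero]
      exact Submodule.smul_mem _ _ (Submodule.mem_span_singleton_self v)
    · intro z hz
      obtain ⟨a, rfl⟩ := Submodule.mem_span_singleton.mp hz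
      exact Submodule.mem_inf.mpr ⟨Submodule.smul_mem _ _ hvP, Submodule.smul_mem _ _ hvW⟩
  refine ⟨W, ?_, ?_, ?_⟩
  · -- finrank W = n
    have hrange : Module.finrank k (LinearMap.range g) = n - 1 := by
      rw [LinearMap.finrank_range_of_inj ginj, hP₁rank]
    have hdisj2 : (k ∙ v) ⊓ LinearMap.range g = ⊥ := by
      rw [eq_bot_iff]
      rintro z hz
      obtain ⟨hz1, hz2⟩ := Submodule.mem_inf.mp hz
      obtain ⟨a, rfl⟩ := Submodule.mem_span_singleton.mp hz1
      obtain ⟨x, hx⟩ := hz2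
      have hav : a • v ∈ P := Submodule.smul_mem _ _ hvP
      have hx0 : x = 0 := key (a • v) hav 0 x (by rw [hx]; module)
      rw [hx0, map_zero] at hx
      simp [← hx]
    have h1 := Submodule.finrank_sup_add_finrank_inf_eq (k ∙ v) (LinearMap.range g)
    rw [hdisj2, finrank_bot, finrank_span_singleton hv0, hrange] at h1
    rw [hW]
    omega
  · -- totally isotropic
    intro w hw
    obtain ⟨a, x, rfl⟩ := hmemW w hw
    rw [hg, expand, expand ((x : V)) ((f x : V))]
    have e1 : B v (x : V) = 0 := hBHP₁ _ x.2 v hvH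
    have e2 : B v ((f x : V)) = 0 := hBPP v hvP _ (hfx_mem x)
    have e3 : B ((x : V)) ((f x : V)) = 0 := hBPP _ (hP₁P x.2) _ (hfx_mem x)
    have e4 : B (a • v) ((x : V) + ((f x : V))) = 0 := by
      rw [_root_.map_smul, LinearMap.smul_apply, map_add, e1, e2]
      simp
    rw [e3, e4, QuadraticMap.map_smul, hQv, hQf]
    simp
  · rw [hPW]
    exact finrank_span_singleton hv0
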